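/- A maximal ideal M of B₁(X) is real if and only if Z_B[M] is closed under countable intersections, if and only if Z_B[M] has the countable intersection property (every countable subfamily has nonempty intersection). -/

import Mathlib

open Filter Topology

/-- A function `f : X → ℝ` is Baire one if it is a pointwise limit of a
sequence of continuous functions. -/
def IsBaireOne {X : Type*} [TopologicalSpace X] (f : X → ℝ) : Prop :=
  ∃ F : ℕ → C(X, ℝ), ∀ x, Tendsto (fun n => F n x) atTop (𝓝 (f x))

/-- The ring `B₁(X)` of real valued Baire one functions on `X`, as a subring
of the ring of all functions `X → ℝ`. -/
def B1 (X : Type*) [TopologicalSpace X] : Subring (X → ℝ) where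
  carrier := {f | IsBaireOne f}
  zero_mem' := ⟨fun _ => 0, fun x => by simpa using tendsto_const_nhds⟩
  one_mem' := ⟨fun _ => 1, fun x => by simpa using tendsto_const_nhds⟩
  add_mem' := by
    rintro f g ⟨F, hF⟩ ⟨G, hG⟩
    exact ⟨fun n => F n + G n, fun x => by simpa using (hF x).add (hG x)⟩
  mul_mem' := by
    rintro f g ⟨F, hF⟩ ⟨G, hG⟩
    exact ⟨fun n => F n * G n, fun x => by simpa using (hF x).mul (hG x)⟩
  neg_mem' := by
    rintro f ⟨F, hF⟩
    exact ⟨fun n => -F n, fun x => by simpa using (hF x).neg⟩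

variable {X : Type*} [TopologicalSpace X]

/-- The constant function with value `r`, as an element of `B₁(X)`. -/
def bconst (X : Type*) [TopologicalSpace X] (r : ℝ) : B1 X :=
  ⟨fun _ => r, ⟨fun _ => ContinuousMap.const X r, fun x => by simpa using tendsto_const_nhds⟩⟩

theorem babs_mem (f : B1 X) : (fun x => |(f : X → ℝ) x|) ∈ B1 X := by
  obtain ⟨F, hF⟩ := f.2
  exact ⟨fun n => ⟨fun x => |F n x|, (F n).continuous.abs⟩, fun x => (hF x).abs⟩

/-- The absolute value `|f|` of a Baire one function. -/
def babs (f : B1 X) : B1 X := ⟨fun x => |(f : X → ℝ) x|, babs_mem f⟩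

/-- The zero set `Z(f)` of `f ∈ B₁(X)`. -/
def zset (f : B1 X) : Set X := {x | (f : X → ℝ) x = 0}

/-- `Z(B₁(X))`, the family of all zero sets of Baire one functions on `X`. -/
def zsets (X : Type*) [TopologicalSpace X] : Set (Set X) := {Z | ∃ f : B1 X, zset f = Z}

/-- `Z_B[I] = {Z(f) : f ∈ I}` for an ideal `I` of `B₁(X)`. -/
def zbi (I : Ideal (B1 X)) : Set (Set X) := {Z | ∃ f ∈ I, zset f = Z}

/-- A `Z_B`-filter on `X`: a nonempty family of zero sets of Baire one functions,
not containing `∅`, closed under finite intersections and upward closed in `Z(B₁(X))`. -/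
def IsZBFilter (F : Set (Set X)) : Prop :=
  F.Nonempty ∧ F ⊆ zsets X ∧ ∅ ∉ F ∧
    (∀ Z₁ ∈ F, ∀ Z₂ ∈ F, Z₁ ∩ Z₂ ∈ F) ∧
    (∀ Z ∈ F, ∀ Z' ∈ zsets X, Z ⊆ Z' → Z' ∈ F)

/-- A `Z_B`-ultrafilter on `X`: a maximal `Z_B`-filter. -/
def IsZBUltrafilter (U : Set (Set X)) : Prop :=
  IsZBFilter U ∧ ∀ F : Set (Set X), IsZBFilter F → U ⊆ F → F = U

/-- The finite intersection property: every nonempty finite subfamily has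
nonempty intersection. -/
def FIP {X : Type*} (B : Set (Set X)) : Prop :=
  ∀ S : Finset (Set X), ↑S ⊆ B → S.Nonempty → (⋂₀ (S : Set (Set X))).Nonempty

/-- An ideal `I` of `B₁(X)` is a `Z_B`-ideal if `Z_B⁻¹[Z_B[I]] = I`. -/
def IsZBIdeal (I : Ideal (B1 X)) : Prop :=
  ∀ f : B1 X, zset f ∈ zbi I → f ∈ I

/-- An ideal of `B₁(X)` is fixed if the zero sets of its members have a common point. -/
def FixedIdeal (I : Ideal (B1 X)) : Prop :=
  (⋂ f ∈ (I : Set (B1 X)), zset f).Nonempty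

/-- A prime `Z_B`-filter. -/
def IsPrimeZBFilter (F : Set (Set X)) : Prop :=
  IsZBFilter F ∧ ∀ Z₁ ∈ zsets X, ∀ Z₂ ∈ zsets X, Z₁ ∪ Z₂ ∈ F → Z₁ ∈ F ∨ Z₂ ∈ F

/-- `M(f) ≥ 0` in the quotient `B₁(X)/M`: the coset contains a nonnegative function. -/
def QNonneg (M : Ideal (B1 X)) (a : B1 X ⧸ M) : Prop :=
  ∃ g : B1 X, (∀ x, 0 ≤ (g : X → ℝ) x) ∧ Ideal.Quotient.mk M g = a

/-- `M(f) > 0` in the quotient `B₁(X)/M`. -/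
def QPos (M : Ideal (B1 X)) (a : B1 X ⧸ M) : Prop := QNonneg M a ∧ a ≠ 0

/-- A maximal ideal `M` of `B₁(X)` is real if the canonical copy of `ℝ`
(via constant functions) is all of `B₁(X)/M`. -/
def RealIdeal (M : Ideal (B1 X)) : Prop :=
  Function.Surjective (fun r : ℝ => Ideal.Quotient.mk M (bconst X r))

/-- An `F_σ` subset: a countable union of closed sets. -/
def IsFSigma {X : Type*} [TopologicalSpace X] (s : Set X) : Prop :=
  ∃ F : ℕ → Set X, (∀ n, IsClosed (F n)) ∧ s = ⋃ n, F n

section Aux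

set_option maxHeartbeats 1000000

variable {X : Type*} [TopologicalSpace X]

lemma bmin_const_mem (f : B1 X) (c : ℝ) : (fun x => min |(f : X → ℝ) x| c) ∈ B1 X := by
  obtain ⟨F, hF⟩ := f.2
  exact ⟨fun n => ⟨fun x => min |F n x| c, ((F n).continuous.abs.min continuous_const)⟩,
    fun x => ((hF x).abs.min tendsto_const_nhds)⟩

lemma bmax_zero_mem (f : B1 X) : (fun x => max ((f : X → ℝ) x) 0) ∈ B1 X := by
  obtain ⟨F, hF⟩ := f.2
  exact ⟨fun n => ⟨fun x => max (F n x) 0, ((F n).continuous.max continuous_const)⟩,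
    fun x => ((hF x).max tendsto_const_nhds)⟩

lemma binv_mem (f : B1 X) (hf : ∀ x, (f : X → ℝ) x ≠ 0) :
    (fun x => ((f : X → ℝ) x)⁻¹) ∈ B1 X := by
  obtain ⟨F, hF⟩ := f.2
  refine ⟨fun n => ⟨fun x => F n x / ((F n x)^2 + 1/(n+1)), ?_⟩, fun x => ?_⟩
  · exact (F n).continuous.div (((F n).continuous.pow 2).add continuous_const)
      (fun x => by positivity)
  · have h1 : Tendsto (fun n : ℕ => (F n x)^2 + 1/(n+1)) atTop (𝓝 ((f : X → ℝ) x ^ 2 + 0)) :=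
      ((hF x).pow 2).add tendsto_one_div_add_atTop_nhds_zero_nat
    have h2 : Tendsto (fun n : ℕ => F n x / ((F n x)^2 + 1/(n+1))) atTop
        (𝓝 ((f : X → ℝ) x / ((f : X → ℝ) x ^ 2 + 0))) :=
      (hF x).div h1 (by simpa using pow_ne_zero 2 (hf x))
    have : (f : X → ℝ) x / ((f : X → ℝ) x ^ 2 + 0) = ((f : X → ℝ) x)⁻¹ := by
      rw [add_zero, sq, div_mul_eq_div_div, div_self (hf x), one_div]
    rwa [this] at h2

lemma isUnit_of_nonvanishing (f : B1 X) (hf : ∀ x, (f : X → ℝ) x ≠ 0) : IsUnit f := by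
  refine IsUnit.of_mul_eq_one (a := f) ⟨fun x => ((f : X → ℝ) x)⁻¹, binv_mem f hf⟩ ?_
  ext x
  exact mul_inv_cancel₀ (hf x)

lemma exists_zero_of_mem {M : Ideal (B1 X)} (hM : M ≠ ⊤) {f : B1 X} (hf : f ∈ M) :
    ∃ x, (f : X → ℝ) x = 0 := by
  by_contra h
  push_neg at h
  exact hM (Ideal.eq_top_of_isUnit_mem _ hf (isUnit_of_nonvanishing f h))

/-- sum of two self-products vanishing -/
lemma mul_self_add_mul_self_eq_zero' {a b : ℝ} (h : a * a + b * b = 0) : a = 0 ∧ b = 0 := by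
  constructor
  · have : a * a = 0 := by nlinarith [mul_self_nonneg a, mul_self_nonneg b]
    exact mul_self_eq_zero.1 this
  · have : b * b = 0 := by nlinarith [mul_self_nonneg a, mul_self_nonneg b]
    exact mul_self_eq_zero.1 this

/-- Maximal ideals of `B₁(X)` are `z`-ideals. -/
lemma mem_of_zset_mem {M : Ideal (B1 X)} (hM : M.IsMaximal) {h : B1 X}
    (hz : zset h ∈ zbi M) : h ∈ M := by
  obtain ⟨f, hfM, hfz⟩ := hz
  by_contra hh
  obtain ⟨a, m, hmM, heq⟩ := hM.exists_inv hh
  have hg : f * f + m * m ∈ M := M.add_mem (M.mul_mem_left f hfM) (M.mul_mem_left m hmM)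
  obtain ⟨x, hx⟩ := exists_zero_of_mem hM.ne_top hg
  have hx' : (f : X → ℝ) x * (f : X → ℝ) x + (m : X → ℝ) x * (m : X → ℝ) x = 0 := hx
  obtain ⟨hfx, hmx⟩ := mul_self_add_mul_self_eq_zero' hx'
  have hhx : (h : X → ℝ) x = 0 := by
    have : x ∈ zset h := hfz ▸ hfx
    exact this
  have := congrFun (congrArg (fun (u : B1 X) => (u : X → ℝ)) heq) x
  simp only [Subring.coe_add, Subring.coe_mul, Subring.coe_one, Pi.add_apply, Pi.mul_apply,
    Pi.one_apply] at this
  rw [hhx, hmx] at this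
  norm_num at this

noncomputable def trm (f : ℕ → X → ℝ) (n : ℕ) (x : X) : ℝ := min |f n x| ((2:ℝ)⁻¹^n)

lemma trm_nonneg (f : ℕ → X → ℝ) (n : ℕ) (x : X) : 0 ≤ trm f n x :=
  le_min (abs_nonneg _) (by positivity)

lemma trm_le (f : ℕ → X → ℝ) (n : ℕ) (x : X) : trm f n x ≤ (2:ℝ)⁻¹^n := min_le_right _ _

lemma trm_summable (f : ℕ → X → ℝ) (x : X) : Summable (fun n => trm f n x) :=
  Summable.of_nonneg_of_le (fun n => trm_nonneg f n x) (fun n => trm_le f n x)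
    (summable_geometric_of_lt_one (by norm_num) (by norm_num))

lemma trm_eq_zero_iff (f : ℕ → X → ℝ) (n : ℕ) (x : X) : trm f n x = 0 ↔ f n x = 0 := by
  unfold trm
  constructor
  · intro h
    rcases min_eq_iff.1 h with ⟨h1, _⟩ | ⟨h1, _⟩
    · exact abs_eq_zero.1 h1
    · exact absurd h1 (by positivity)
  · intro h; simp [h]

lemma tsum_half_tail (K : ℕ) : ∑' n : ℕ, (2:ℝ)⁻¹^(n + K) = 2 * (2:ℝ)⁻¹^K := by
  have : ∀ n : ℕ, (2:ℝ)⁻¹^(n + K) = (2:ℝ)⁻¹^n * (2:ℝ)⁻¹^K := fun n => pow_add _ _ _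
  rw [tsum_congr this, tsum_mul_right,
    tsum_geometric_of_lt_one (by norm_num) (by norm_num)]
  norm_num

lemma trm_tail_le (f : ℕ → X → ℝ) (x : X) (K : ℕ) :
    ∑' n : ℕ, trm f (n + K) x ≤ 2 * (2:ℝ)⁻¹^K := by
  rw [← tsum_half_tail K]
  exact Summable.tsum_le_tsum (fun n => trm_le f (n + K) x)
    ((trm_summable f x).comp_injective (add_left_injective K))
    (((summable_geometric_of_lt_one (by norm_num : (0:ℝ) ≤ 2⁻¹)
      (by norm_num))).comp_injective (add_left_injective K))

lemma summin_baireOne (f : ℕ → X → ℝ) (hf : ∀ n, IsBaireOne (f n)) :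
    IsBaireOne (fun x => ∑' n, trm f n x) := by
  choose F hF using hf
  refine ⟨fun m => ∑ n ∈ Finset.range (m+1),
    ⟨fun x => min |F n m x| ((2:ℝ)⁻¹^n),
      ((F n m).continuous.abs.min continuous_const)⟩, fun x => ?_⟩
  have happ : ∀ m, ((∑ n ∈ Finset.range (m+1),
      (⟨fun x => min |F n m x| ((2:ℝ)⁻¹^n), ((F n m).continuous.abs.min continuous_const)⟩
        : C(X,ℝ))) x) = ∑ n ∈ Finset.range (m+1), min |F n m x| ((2:ℝ)⁻¹^n) := by
    intro m
    simp
  rw [Metric.tendsto_atTop]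
  intro ε hε
  obtain ⟨K, hK⟩ := exists_pow_lt_of_lt_one (show (0:ℝ) < ε/6 by positivity)
    (show (2:ℝ)⁻¹ < 1 by norm_num)
  have hfin : Tendsto (fun m => ∑ n ∈ Finset.range (K+1), min |F n m x| ((2:ℝ)⁻¹^n))
      atTop (𝓝 (∑ n ∈ Finset.range (K+1), trm f n x)) := by
    refine tendsto_finset_sum _ (fun n _ => ?_)
    exact ((hF n x).abs.min tendsto_const_nhds)
  rw [Metric.tendsto_atTop] at hfin
  obtain ⟨N₁, hN₁⟩ := hfin (ε/3) (by positivity)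
  refine ⟨max N₁ K, fun m hm => ?_⟩
  have hmK : K ≤ m := le_trans (le_max_right _ _) hm
  have hmN : N₁ ≤ m := le_trans (le_max_left _ _) hm
  rw [happ, Real.dist_eq]
  show |(∑ n ∈ Finset.range (m+1), min |F n m x| ((2:ℝ)⁻¹^n)) - ∑' n, trm f n x| < ε
  have hsplit : ∑ n ∈ Finset.range (m+1), min |F n m x| ((2:ℝ)⁻¹^n)
      = (∑ n ∈ Finset.range (K+1), min |F n m x| ((2:ℝ)⁻¹^n))
        + ∑ n ∈ Finset.Ico (K+1) (m+1), min |F n m x| ((2:ℝ)⁻¹^n) := by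
    rw [Finset.range_eq_Ico, Finset.range_eq_Ico]
    exact (Finset.sum_Ico_consecutive (fun n => min |F n m x| ((2:ℝ)⁻¹^n)) (m := 0) (n := K+1) (k := m+1) (Nat.zero_le _) (by omega)).symm
  have hS : ∑' n, trm f n x
      = (∑ n ∈ Finset.range (K+1), trm f n x) + ∑' n, trm f (n + (K+1)) x :=
    (Summable.sum_add_tsum_nat_add (K+1) (trm_summable f x)).symm
  rw [hsplit, hS]
  have hB0 : 0 ≤ ∑ n ∈ Finset.Ico (K+1) (m+1), min |F n m x| ((2:ℝ)⁻¹^n) :=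
    Finset.sum_nonneg (fun n _ => le_min (abs_nonneg _) (by positivity))
  have hB : ∑ n ∈ Finset.Ico (K+1) (m+1), min |F n m x| ((2:ℝ)⁻¹^n)
      ≤ 2 * (2:ℝ)⁻¹^(K+1) := by
    calc ∑ n ∈ Finset.Ico (K+1) (m+1), min |F n m x| ((2:ℝ)⁻¹^n)
        ≤ ∑ n ∈ Finset.Ico (K+1) (m+1), (2:ℝ)⁻¹^n :=
          Finset.sum_le_sum (fun n _ => min_le_right _ _)
      _ = ∑ j ∈ Finset.range (m+1 - (K+1)), (2:ℝ)⁻¹^((K+1) + j) := by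
          rw [Finset.sum_Ico_eq_sum_range]
      _ ≤ ∑' j : ℕ, (2:ℝ)⁻¹^((K+1) + j) := by
          refine Summable.sum_le_tsum _ (fun j _ => by positivity) ?_
          simp only [pow_add]
          exact (summable_geometric_of_lt_one (r := (2:ℝ)⁻¹) (by norm_num)
            (by norm_num)).mul_left _
      _ = 2 * (2:ℝ)⁻¹^(K+1) := by
          simp only [add_comm (K+1)]
          exact tsum_half_tail (K+1)
  have hT0 : 0 ≤ ∑' n, trm f (n + (K+1)) x := tsum_nonneg (fun n => trm_nonneg f _ x)
  have hT : ∑' n, trm f (n + (K+1)) x ≤ 2 * (2:ℝ)⁻¹^(K+1) := trm_tail_le f x (K+1)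
  have hA : |(∑ n ∈ Finset.range (K+1), min |F n m x| ((2:ℝ)⁻¹^n))
      - ∑ n ∈ Finset.range (K+1), trm f n x| < ε/3 := by
    have := hN₁ m hmN; rwa [Real.dist_eq] at this
  have key : |(∑ n ∈ Finset.range (K+1), min |F n m x| ((2:ℝ)⁻¹^n)
        + ∑ n ∈ Finset.Ico (K+1) (m+1), min |F n m x| ((2:ℝ)⁻¹^n))
      - ((∑ n ∈ Finset.range (K+1), trm f n x) + ∑' n, trm f (n + (K+1)) x)|
      ≤ |(∑ n ∈ Finset.range (K+1), min |F n m x| ((2:ℝ)⁻¹^n))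
          - ∑ n ∈ Finset.range (K+1), trm f n x|
        + |(∑ n ∈ Finset.Ico (K+1) (m+1), min |F n m x| ((2:ℝ)⁻¹^n))
          - ∑' n, trm f (n + (K+1)) x| := by
    have heq : (∑ n ∈ Finset.range (K+1), min |F n m x| ((2:ℝ)⁻¹^n)
        + ∑ n ∈ Finset.Ico (K+1) (m+1), min |F n m x| ((2:ℝ)⁻¹^n))
        - ((∑ n ∈ Finset.range (K+1), trm f n x) + ∑' n, trm f (n + (K+1)) x)
        = ((∑ n ∈ Finset.range (K+1), min |F n m x| ((2:ℝ)⁻¹^n))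
            - ∑ n ∈ Finset.range (K+1), trm f n x)
          + ((∑ n ∈ Finset.Ico (K+1) (m+1), min |F n m x| ((2:ℝ)⁻¹^n))
            - ∑' n, trm f (n + (K+1)) x) := by ring
    rw [heq]
    exact abs_add_le _ _
  have hBT : |(∑ n ∈ Finset.Ico (K+1) (m+1), min |F n m x| ((2:ℝ)⁻¹^n))
      - ∑' n, trm f (n + (K+1)) x| ≤ 2 * (2:ℝ)⁻¹^(K+1) := by
    rw [abs_sub_le_iff]
    constructor <;> linarith
  have h2K : 2 * (2:ℝ)⁻¹^(K+1) = (2:ℝ)⁻¹^K := by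
    rw [pow_succ]; ring
  calc |(∑ n ∈ Finset.range (K+1), min |F n m x| ((2:ℝ)⁻¹^n)
        + ∑ n ∈ Finset.Ico (K+1) (m+1), min |F n m x| ((2:ℝ)⁻¹^n))
      - ((∑ n ∈ Finset.range (K+1), trm f n x) + ∑' n, trm f (n + (K+1)) x)| ≤ _ := key
    _ < ε/3 + 2 * (2:ℝ)⁻¹^(K+1) := by linarith
    _ < ε := by rw [h2K]; linarith

/-- The Baire one function `x ↦ ∑' n, min |fₙ x| 2⁻ⁿ`. -/
noncomputable def bsum (f : ℕ → B1 X) : B1 X :=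
  ⟨fun x => ∑' n, trm (fun n x => ((f n : X → ℝ)) x) n x,
    summin_baireOne _ (fun n => (f n).2)⟩

lemma bsum_apply (f : ℕ → B1 X) (x : X) :
    ((bsum f : B1 X) : X → ℝ) x = ∑' n, trm (fun n x => ((f n : X → ℝ)) x) n x := rfl

lemma bsum_eq_zero_iff (f : ℕ → B1 X) (x : X) :
    ((bsum f : B1 X) : X → ℝ) x = 0 ↔ ∀ n, (f n : X → ℝ) x = 0 := by
  rw [bsum_apply]
  constructor
  · intro h n
    have hle : trm (fun n x => ((f n : X → ℝ)) x) n x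
        ≤ ∑' n, trm (fun n x => ((f n : X → ℝ)) x) n x :=
      Summable.le_tsum (trm_summable _ x) n (fun i _ => trm_nonneg _ i x)
    have h0 : trm (fun n x => ((f n : X → ℝ)) x) n x = 0 :=
      le_antisymm (h ▸ hle) (trm_nonneg _ n x)
    exact (trm_eq_zero_iff _ n x).1 h0
  · intro h
    have : ∀ n, trm (fun n x => ((f n : X → ℝ)) x) n x = 0 :=
      fun n => (trm_eq_zero_iff _ n x).2 (h n)
    simp [tsum_congr this]

lemma zset_bsum (f : ℕ → B1 X) : zset (bsum f) = ⋂ n, zset (f n) := by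
  ext x
  simp only [zset, Set.mem_setOf_eq, Set.mem_iInter]
  exact bsum_eq_zero_iff f x

/-- `max (g - q) 0` as an element of `B₁(X)`; vanishes exactly where `g ≤ q`. -/
noncomputable def bplus (g : B1 X) (q : ℝ) : B1 X :=
  ⟨fun x => max (((g - bconst X q : B1 X) : X → ℝ) x) 0, bmax_zero_mem _⟩

noncomputable def bminus (g : B1 X) (q : ℝ) : B1 X :=
  ⟨fun x => max (((bconst X q - g : B1 X) : X → ℝ) x) 0, bmax_zero_mem _⟩

lemma bplus_apply (g : B1 X) (q : ℝ) (x : X) :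
    ((bplus g q : B1 X) : X → ℝ) x = max ((g : X → ℝ) x - q) 0 := rfl

lemma bminus_apply (g : B1 X) (q : ℝ) (x : X) :
    ((bminus g q : B1 X) : X → ℝ) x = max (q - (g : X → ℝ) x) 0 := rfl

lemma bplus_eq_zero_iff (g : B1 X) (q : ℝ) (x : X) :
    ((bplus g q : B1 X) : X → ℝ) x = 0 ↔ (g : X → ℝ) x ≤ q := by
  rw [bplus_apply]
  constructor
  · intro h
    have h1 : (g : X → ℝ) x - q ≤ max ((g : X → ℝ) x - q) 0 := le_max_left _ _
    rw [h] at h1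
    linarith
  · intro h
    have : (g : X → ℝ) x - q ≤ 0 := by linarith
    simp [max_eq_right this]

lemma bminus_eq_zero_iff (g : B1 X) (q : ℝ) (x : X) :
    ((bminus g q : B1 X) : X → ℝ) x = 0 ↔ q ≤ (g : X → ℝ) x := by
  rw [bminus_apply]
  constructor
  · intro h
    by_contra hc
    push_neg at hc
    have h1 : q - (g : X → ℝ) x ≤ max (q - (g : X → ℝ) x) 0 := le_max_left _ _
    rw [h] at h1
    linarith
  · intro h
    have : q - (g : X → ℝ) x ≤ 0 := by linarith
    simp [max_eq_right this]

lemma bplus_mul_bminus (g : B1 X) (q : ℝ) : bplus g q * bminus g q = 0 := by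
  ext x
  show max ((g : X → ℝ) x - q) 0 * max (q - (g : X → ℝ) x) 0 = 0
  rcases le_total ((g : X → ℝ) x) q with h | h
  · rw [max_eq_right (by linarith : (g : X → ℝ) x - q ≤ 0), zero_mul]
  · rw [max_eq_right (by linarith : q - (g : X → ℝ) x ≤ 0), mul_zero]

end Aux


section Main

set_option maxHeartbeats 1000000

variable {X : Type*} [TopologicalSpace X]

lemma eval_one_eq {a h m : B1 X} (he : a * h + m = 1) (x : X) :
    (a : X → ℝ) x * (h : X → ℝ) x + (m : X → ℝ) x = 1 := by
  have := congrFun (congrArg (fun (u : B1 X) => (u : X → ℝ)) he) x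
  simpa using this

lemma triple_sq_zero {a b c : ℝ} (h : a * a + b * b + c * c = 0) :
    a = 0 ∧ b = 0 ∧ c = 0 := by
  refine ⟨mul_self_eq_zero.1 ?_, mul_self_eq_zero.1 ?_, mul_self_eq_zero.1 ?_⟩ <;>
    nlinarith [mul_self_nonneg a, mul_self_nonneg b, mul_self_nonneg c]

lemma real_of_cip {M : Ideal (B1 X)} (hM : M.IsMaximal)
    (h3 : ∀ Z : ℕ → Set X, (∀ n, Z n ∈ zbi M) → (⋂ n, Z n).Nonempty) : RealIdeal M := by
  intro b
  obtain ⟨g, rfl⟩ := Ideal.Quotient.mk_surjective b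
  have hq : ∀ q : ℝ, bplus g q ∈ M ∨ bminus g q ∈ M := fun q =>
    hM.isPrime.mem_or_mem (show bplus g q * bminus g q ∈ M by
      rw [bplus_mul_bminus]; exact M.zero_mem)
  set A : Set ℝ := {q | bplus g q ∈ M} with hA
  have hdisj : ∀ q q' : ℝ, bplus g q ∈ M → bminus g q' ∈ M → q' ≤ q := by
    intro q q' h1 h2
    have hmem : bplus g q * bplus g q + bminus g q' * bminus g q' ∈ M :=
      M.add_mem (M.mul_mem_left _ h1) (M.mul_mem_left _ h2)
    obtain ⟨x, hx⟩ := exists_zero_of_mem hM.ne_top hmem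
    have hx' : ((bplus g q : B1 X) : X → ℝ) x * ((bplus g q : B1 X) : X → ℝ) x
        + ((bminus g q' : B1 X) : X → ℝ) x * ((bminus g q' : B1 X) : X → ℝ) x = 0 := hx
    obtain ⟨h3', h4⟩ := mul_self_add_mul_self_eq_zero' hx'
    have e1 := (bplus_eq_zero_iff g q x).1 h3'
    have e2 := (bminus_eq_zero_iff g q' x).1 h4
    linarith
  have hAne : A.Nonempty := by
    by_contra hAe
    have hmin : ∀ q : ℝ, bminus g q ∈ M := fun q =>
      (hq q).resolve_left (fun h => hAe ⟨q, h⟩)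
    obtain ⟨x, hx⟩ := h3 (fun n => zset (bminus g n)) (fun n => ⟨bminus g n, hmin n, rfl⟩)
    have hge : ∀ n : ℕ, (n : ℝ) ≤ (g : X → ℝ) x := fun n =>
      (bminus_eq_zero_iff g n x).1 (Set.mem_iInter.1 hx n)
    obtain ⟨n, hn⟩ := exists_nat_gt ((g : X → ℝ) x)
    linarith [hge n]
  have hBne : ∃ q : ℝ, bminus g q ∈ M := by
    by_contra hB
    push_neg at hB
    have hplus : ∀ q : ℝ, bplus g q ∈ M := fun q => (hq q).resolve_right (hB q)
    obtain ⟨x, hx⟩ := h3 (fun n => zset (bplus g (-n)))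
      (fun n => ⟨bplus g (-n), hplus _, rfl⟩)
    have hle : ∀ n : ℕ, (g : X → ℝ) x ≤ -(n : ℝ) := fun n =>
      (bplus_eq_zero_iff g (-n) x).1 (Set.mem_iInter.1 hx n)
    obtain ⟨n, hn⟩ := exists_nat_gt (-(g : X → ℝ) x)
    linarith [hle n]
  obtain ⟨q₀, hq₀⟩ := hBne
  have hbdd : BddBelow A := ⟨q₀, fun q hqA => hdisj q q₀ hqA hq₀⟩
  refine ⟨sInf A, ?_⟩
  show Ideal.Quotient.mk M (bconst X (sInf A)) = Ideal.Quotient.mk M g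
  rw [Ideal.Quotient.eq]
  by_contra hng
  obtain ⟨a, m, hmM, hone⟩ := hM.exists_inv hng
  have hqn : ∀ n : ℕ, ∃ q ∈ A, q < sInf A + 1/(n+1) := fun n =>
    exists_lt_of_csInf_lt hAne (lt_add_of_pos_right _ (by positivity))
  choose qn hqnA hqnlt using hqn
  have hpn : ∀ n : ℕ, bminus g (sInf A - 1/(n+1)) ∈ M := by
    intro n
    refine (hq _).resolve_left (fun hc => ?_)
    have h1 : sInf A ≤ sInf A - 1/(n+1) := csInf_le hbdd hc
    have h2 : (0:ℝ) < 1/(n+1) := by positivity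
    linarith
  obtain ⟨x, hx⟩ := h3
    (fun n => zset (m * m + bplus g (qn n) * bplus g (qn n)
      + bminus g (sInf A - 1/(n+1)) * bminus g (sInf A - 1/(n+1))))
    (fun n => ⟨_, M.add_mem (M.add_mem (M.mul_mem_left _ hmM)
      (M.mul_mem_left _ (hqnA n))) (M.mul_mem_left _ (hpn n)), rfl⟩)
  have hfacts : ∀ n : ℕ, (m : X → ℝ) x = 0 ∧ (g : X → ℝ) x ≤ qn n
      ∧ sInf A - 1/(n+1) ≤ (g : X → ℝ) x := by
    intro n
    have hx' := Set.mem_iInter.1 hx n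
    have hz : (m : X → ℝ) x * (m : X → ℝ) x
        + ((bplus g (qn n) : B1 X) : X → ℝ) x * ((bplus g (qn n) : B1 X) : X → ℝ) x
        + ((bminus g (sInf A - 1/(n+1)) : B1 X) : X → ℝ) x
          * ((bminus g (sInf A - 1/(n+1)) : B1 X) : X → ℝ) x = 0 := hx'
    obtain ⟨e1, e2, e3⟩ := triple_sq_zero hz
    exact ⟨e1, (bplus_eq_zero_iff g _ x).1 e2, (bminus_eq_zero_iff g _ x).1 e3⟩
  have hgx : (g : X → ℝ) x = sInf A := by
    by_contra hne
    obtain ⟨n, hn⟩ := exists_nat_one_div_lt (abs_pos.2 (sub_ne_zero.2 hne))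
    obtain ⟨_, e2, e3⟩ := hfacts n
    have h4 := hqnlt n
    have h5 : |(g : X → ℝ) x - sInf A| ≤ 1/(n+1) := abs_le.2 ⟨by linarith, by linarith⟩
    linarith
  have := eval_one_eq hone x
  have hmx : (m : X → ℝ) x = 0 := (hfacts 0).1
  have hsub : ((bconst X (sInf A) - g : B1 X) : X → ℝ) x = sInf A - (g : X → ℝ) x := rfl
  rw [hsub, hgx, sub_self, mul_zero, hmx] at this
  norm_num at this

lemma cip_of_real {M : Ideal (B1 X)} (hM : M.IsMaximal) (h1 : RealIdeal M) :
    ∀ Z : ℕ → Set X, (∀ n, Z n ∈ zbi M) → (⋂ n, Z n).Nonempty := by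
  intro Z hZ
  by_contra hemp
  choose f hfM hfz using hZ
  have hall : ∀ x, ∃ n, (f n : X → ℝ) x ≠ 0 := by
    intro x
    by_contra hc
    push_neg at hc
    exact hemp ⟨x, Set.mem_iInter.2 (fun n => (hfz n) ▸ (hc n : x ∈ zset (f n)))⟩
  obtain ⟨r, hr⟩ := h1 (Ideal.Quotient.mk M (bsum f))
  rw [show (fun r : ℝ => Ideal.Quotient.mk M (bconst X r)) r
    = Ideal.Quotient.mk M (bconst X r) from rfl, Ideal.Quotient.eq] at hr
  set G : ℕ → B1 X := fun N => ∑ n ∈ Finset.range N,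
    (⟨fun x => trm (fun n x => ((f n : X → ℝ)) x) n x,
      bmin_const_mem (f n) ((2:ℝ)⁻¹^n)⟩ : B1 X) with hG
  have hGapp : ∀ N x, ((G N : B1 X) : X → ℝ) x
      = ∑ n ∈ Finset.range N, trm (fun n x => ((f n : X → ℝ)) x) n x := by
    intro N x
    have h := congrFun (map_sum (B1 X).subtype
      (fun n => (⟨fun x => trm (fun n x => ((f n : X → ℝ)) x) n x,
        bmin_const_mem (f n) ((2:ℝ)⁻¹^n)⟩ : B1 X)) (Finset.range N)) x
    simpa [hG, Finset.sum_apply] using h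
  have hGmem : ∀ N, G N ∈ M := by
    intro N
    refine mem_of_zset_mem hM ⟨∑ n ∈ Finset.range N, f n * f n,
      sum_mem (fun n _ => M.mul_mem_left _ (hfM n)), ?_⟩
    ext x
    simp only [zset, Set.mem_setOf_eq]
    have hsq : ∀ x : X, ((∑ n ∈ Finset.range N, f n * f n : B1 X) : X → ℝ) x
        = ∑ n ∈ Finset.range N, (f n : X → ℝ) x * (f n : X → ℝ) x := by
      intro x
      have h := congrFun (map_sum (B1 X).subtype
        (fun n => f n * f n) (Finset.range N)) x
      simpa [Finset.sum_apply] using h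
    rw [hsq, hGapp]
    rw [Finset.sum_eq_zero_iff_of_nonneg (fun n _ => mul_self_nonneg _),
      Finset.sum_eq_zero_iff_of_nonneg (fun n _ => trm_nonneg _ n x)]
    constructor
    · intro h n hn
      exact (trm_eq_zero_iff _ n x).2 (mul_self_eq_zero.1 (h n hn))
    · intro h n hn
      rw [mul_self_eq_zero]
      exact (trm_eq_zero_iff _ n x).1 (h n hn)
  have htail : ∀ (N : ℕ) (x : X), ((bsum f : B1 X) : X → ℝ) x - ((G N : B1 X) : X → ℝ) x
      = ∑' n, trm (fun n x => ((f n : X → ℝ)) x) (n + N) x := by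
    intro N x
    rw [bsum_apply, hGapp, ← Summable.sum_add_tsum_nat_add N (trm_summable _ x)]
    ring
  have hrle : ∀ N : ℕ, r ≤ 2 * (2:ℝ)⁻¹^N := by
    intro N
    by_contra hlt
    push_neg at hlt
    have humem : bconst X r - bsum f + G N ∈ M := M.add_mem hr (hGmem N)
    obtain ⟨x, hx⟩ := exists_zero_of_mem hM.ne_top humem
    have hx' : r - ((bsum f : B1 X) : X → ℝ) x + ((G N : B1 X) : X → ℝ) x = 0 := hx
    have h1' := htail N x
    have h2' : ∑' n, trm (fun n x => ((f n : X → ℝ)) x) (n + N) x ≤ 2 * (2:ℝ)⁻¹^N :=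
      trm_tail_le _ x N
    linarith
  have hr0 : r ≤ 0 := by
    have hten : Tendsto (fun N : ℕ => 2 * (2:ℝ)⁻¹^N) atTop (𝓝 0) := by
      simpa using (tendsto_pow_atTop_nhds_zero_of_lt_one
        (by norm_num : (0:ℝ) ≤ 2⁻¹) (by norm_num)).const_mul (2:ℝ)
    exact ge_of_tendsto' hten hrle
  obtain ⟨x, hx⟩ := exists_zero_of_mem hM.ne_top hr
  have hx' : r - ((bsum f : B1 X) : X → ℝ) x = 0 := hx
  have hpos : 0 < ((bsum f : B1 X) : X → ℝ) x := by
    obtain ⟨n, hn⟩ := hall x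
    have h1' : 0 < trm (fun n x => ((f n : X → ℝ)) x) n x := by
      rcases lt_or_eq_of_le (trm_nonneg (fun n x => ((f n : X → ℝ)) x) n x) with h | h
      · exact h
      · exact absurd ((trm_eq_zero_iff _ n x).1 h.symm) hn
    calc (0:ℝ) < trm (fun n x => ((f n : X → ℝ)) x) n x := h1'
      _ ≤ ((bsum f : B1 X) : X → ℝ) x :=
        Summable.le_tsum (trm_summable _ x) n (fun i _ => trm_nonneg _ i x)
  linarith

lemma closed_of_cip {M : Ideal (B1 X)} (hM : M.IsMaximal)
    (h3 : ∀ Z : ℕ → Set X, (∀ n, Z n ∈ zbi M) → (⋂ n, Z n).Nonempty) :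
    ∀ Z : ℕ → Set X, (∀ n, Z n ∈ zbi M) → (⋂ n, Z n) ∈ zbi M := by
  intro Z hZ
  choose f hfM hfz using hZ
  refine ⟨bsum f, ?_, by rw [zset_bsum]; exact Set.iInter_congr hfz⟩
  by_contra hc
  obtain ⟨a, m, hmM, hone⟩ := hM.exists_inv hc
  obtain ⟨x, hx⟩ := h3 (fun n => zset (m * m + f n * f n))
    (fun n => ⟨_, M.add_mem (M.mul_mem_left _ hmM) (M.mul_mem_left _ (hfM n)), rfl⟩)
  have hfacts : ∀ n : ℕ, (m : X → ℝ) x = 0 ∧ (f n : X → ℝ) x = 0 := by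
    intro n
    have hz : (m : X → ℝ) x * (m : X → ℝ) x
        + (f n : X → ℝ) x * (f n : X → ℝ) x = 0 := Set.mem_iInter.1 hx n
    exact mul_self_add_mul_self_eq_zero' hz
  have hS : ((bsum f : B1 X) : X → ℝ) x = 0 :=
    (bsum_eq_zero_iff f x).2 (fun n => (hfacts n).2)
  have := eval_one_eq hone x
  rw [hS, mul_zero, (hfacts 0).1] at this
  norm_num at this

end Main

/-- A maximal ideal `M` of `B₁(X)` is real iff `Z_B[M]` is closed under
countable intersections, iff `Z_B[M]` has the countable intersection property. -/
theorem real_maximal_tfae {X : Type*} [TopologicalSpace X]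
    (M : Ideal (B1 X)) (hM : M.IsMaximal) :
    [RealIdeal M,
     ∀ Z : ℕ → Set X, (∀ n, Z n ∈ zbi M) → (⋂ n, Z n) ∈ zbi M,
     ∀ Z : ℕ → Set X, (∀ n, Z n ∈ zbi M) → (⋂ n, Z n).Nonempty].TFAE := by
  tfae_have 1 → 3 := fun h1 => cip_of_real hM h1
  tfae_have 3 → 1 := fun h3 => real_of_cip hM h3
  tfae_have 3 → 2 := fun h3 => closed_of_cip hM h3
  tfae_have 2 → 3 := by
    intro h2 Z hZ
    obtain ⟨f, hfM, hfz⟩ := h2 Z hZ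
    obtain ⟨x, hx⟩ := exists_zero_of_mem hM.ne_top hfM
    exact ⟨x, hfz ▸ (hx : x ∈ zset f)⟩
  tfae_finish
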